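/- Let n = 3 and let v ∈ S² with L = span{v}. Suppose real constants β_i, 0 ≤ i ≤ ⌊(p−1)/2⌋ − b (for some fixed b with 0 ≤ b ≤ ⌊(p−1)/2⌋), satisfy Σ_i β_i Q_{L^⊥}^i u^{p−2b−1−2i} = 0 as symmetric tensors for all u in the unit circle of L^⊥. Then all β_i = 0. -/

import Mathlib

open scoped RealInnerProductSpace
open Finset

/-- The orthogonal projection onto a subspace, as a map into the ambient space. -/
noncomputable def projVec {n : ℕ} (L : Submodule ℝ (EuclideanSpace ℝ (Fin n)))
    (y : EuclideanSpace ℝ (Fin n)) : EuclideanSpace ℝ (Fin n) :=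
  (Submodule.orthogonalProjection L y : EuclideanSpace ℝ (Fin n))

/-- In ℝ³, with `L = span{v}`, if `Σ_i β_i Q_{L^⊥}^i u^{p−2b−1−2i} = 0` as symmetric
tensors (expressed as polynomials in `x`; `Q_{L^⊥}` evaluates to `‖π_{L^⊥}x‖²`) for every
unit vector `u ∈ L^⊥`, then all `β_i = 0`. -/
theorem stmt_18 (p b : ℕ) (hp : 1 ≤ p) (hb : b ≤ (p - 1) / 2)
    (v : EuclideanSpace ℝ (Fin 3)) (hv : ‖v‖ = 1) (β : ℕ → ℝ)
    (h : ∀ u : EuclideanSpace ℝ (Fin 3), ‖u‖ = 1 → u ∈ (Submodule.span ℝ {v})ᗮ →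
      ∀ x : EuclideanSpace ℝ (Fin 3),
        ∑ i ∈ Finset.range ((p - 1) / 2 - b + 1),
          β i * ‖projVec (Submodule.span ℝ {v})ᗮ x‖ ^ (2 * i) *
            ⟪u, x⟫ ^ (p - 2 * b - 1 - 2 * i) = 0) :
    ∀ i ≤ (p - 1) / 2 - b, β i = 0 := by
  have hv0 : v ≠ 0 := by intro h0; rw [h0, norm_zero] at hv; norm_num at hv
  set m := (p - 1) / 2 - b with hm
  have hdim : Module.finrank ℝ (Submodule.span ℝ {v})ᗮ = 2 := by
    have h1 : Module.finrank ℝ (Submodule.span ℝ {v}) = 1 := finrank_span_singleton hv0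
    have h2 := Submodule.finrank_add_finrank_orthogonal (K := Submodule.span ℝ {v})
    have h3 : Module.finrank ℝ (EuclideanSpace ℝ (Fin 3)) = 3 := by simp
    rw [h1, h3] at h2
    omega
  set K := (Submodule.span ℝ {v})ᗮ with hKdef
  let B := (stdOrthonormalBasis ℝ K).reindex (finCongr hdim)
  have hBo := B.orthonormal
  let u : EuclideanSpace ℝ (Fin 3) := B 0
  let w : EuclideanSpace ℝ (Fin 3) := B 1
  have hu1 : ‖u‖ = 1 := by
    have := hBo.1 0
    exact this
  have hw1 : ‖w‖ = 1 := by
    have := hBo.1 1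
    exact this
  have huw : ⟪u, w⟫ = 0 := by
    have := hBo.2 (show (0 : Fin 2) ≠ 1 by decide)
    exact this
  have huK : u ∈ K := (B 0).2
  have hwK : w ∈ K := (B 1).2
  -- key evaluation
  have key : ∀ t : ℝ, ∑ i ∈ Finset.range (m + 1), β i * (1 + t ^ 2) ^ i = 0 := by
    intro t
    have hx := h u hu1 huK (u + t • w)
    have hmem : u + t • w ∈ K := K.add_mem huK (K.smul_mem t hwK)
    have hproj : projVec K (u + t • w) = u + t • w := by
      unfold projVec
      exact Submodule.starProjection_eq_self_iff.mpr hmem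
    have hnorm : ‖u + t • w‖ ^ 2 = 1 + t ^ 2 := by
      rw [norm_add_sq_real, hu1, norm_smul, real_inner_smul_right, huw, hw1]
      rw [mul_pow, Real.norm_eq_abs, sq_abs]
      ring
    have hinner : ⟪u, u + t • w⟫ = 1 := by
      rw [inner_add_right, real_inner_smul_right, huw, real_inner_self_eq_norm_sq, hu1]
      ring
    rw [hproj] at hx
    calc ∑ i ∈ Finset.range (m + 1), β i * (1 + t ^ 2) ^ i
        = ∑ i ∈ Finset.range (m + 1),
            β i * ‖u + t • w‖ ^ (2 * i) * ⟪u, u + t • w⟫ ^ (p - 2 * b - 1 - 2 * i) := by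
          refine Finset.sum_congr rfl fun i _ => ?_
          rw [hinner, one_pow, mul_one, pow_mul, hnorm]
      _ = 0 := hx
  -- polynomial argument
  let P : Polynomial ℝ := ∑ i ∈ Finset.range (m + 1), Polynomial.C (β i) * Polynomial.X ^ i
  have hPeval : ∀ y : ℝ, 1 ≤ y → P.eval y = 0 := by
    intro y hy
    obtain ⟨t, ht⟩ : ∃ t : ℝ, 1 + t ^ 2 = y :=
      ⟨Real.sqrt (y - 1), by rw [Real.sq_sqrt (by linarith)]; ring⟩
    have := key t
    rw [ht] at this
    simpa [P, Polynomial.eval_finset_sum] using this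
  have hP0 : P = 0 := by
    refine Polynomial.eq_zero_of_infinite_isRoot P ?_
    refine Set.Infinite.mono (s := Set.Ici (1 : ℝ)) ?_ (Set.Ici_infinite 1)
    intro y hy
    exact hPeval y hy
  intro i hi
  have hc : P.coeff i = β i := by
    simp only [P, Polynomial.finset_sum_coeff, Polynomial.coeff_C_mul, Polynomial.coeff_X_pow]
    rw [Finset.sum_eq_single i]
    · simp
    · intro j _ hj; simp [Ne.symm hj]
    · intro hni; exact absurd (Finset.mem_range.mpr (Nat.lt_succ_of_le hi)) hni
  rw [← hc, hP0, Polynomial.coeff_zero]
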